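/- For a nonempty topological space X, the following are equivalent: (1) X has the sequence selection property (SSP); (2) X is an s₁-space, i.e., for every subset A of C_p(X), the sequential closure of A in C_p(X) is sequentially closed (s₁(A) = s₂(A)). -/

import Mathlib

open Filter Set Topology

/-- `C_p(X)`: continuous real-valued functions on `X` with the topology of
pointwise convergence (subspace of the product `ℝ^X`). -/
abbrev Cp (X : Type*) [TopologicalSpace X] := {f : X → ℝ // Continuous f}

/-- The sequence selection property. -/
def SSP (X : Type*) [TopologicalSpace X] : Prop :=
  ∀ f : ℕ → ℕ → X → ℝ, (∀ n i, Continuous (f n i)) →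
    (∀ n x, Tendsto (fun i => f n i x) atTop (nhds 0)) →
    ∃ i : ℕ → ℕ, ∀ x, Tendsto (fun n => f n (i n) x) atTop (nhds 0)

lemma cp_tendsto {X : Type*} [TopologicalSpace X] {u : ℕ → Cp X} {g : Cp X} :
    Tendsto u atTop (𝓝 g) ↔ ∀ x, Tendsto (fun n => (u n).1 x) atTop (𝓝 (g.1 x)) := by
  rw [tendsto_subtype_rng, tendsto_pi_nhds]

/-- Truncated running maximum `max_{m ≤ n} min 1 |f m i x|`. -/
noncomputable def Fm {X : Type*} (f : ℕ → ℕ → X → ℝ) : ℕ → ℕ → X → ℝ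
  | 0 => fun i x => min 1 |f 0 i x|
  | (n+1) => fun i x => max (Fm f n i x) (min 1 |f (n+1) i x|)

lemma Fm_cont {X : Type*} [TopologicalSpace X] (f : ℕ → ℕ → X → ℝ)
    (hf : ∀ n i, Continuous (f n i)) : ∀ n i, Continuous (Fm f n i) := by
  intro n
  induction n with
  | zero => exact fun i => continuous_const.min (hf 0 i).abs
  | succ n ih => exact fun i => (ih i).max (continuous_const.min (hf (n+1) i).abs)

lemma Fm_tendsto {X : Type*} (f : ℕ → ℕ → X → ℝ)
    (hf : ∀ n x, Tendsto (fun i => f n i x) atTop (𝓝 0)) :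
    ∀ n x, Tendsto (fun i => Fm f n i x) atTop (𝓝 0) := by
  intro n
  induction n with
  | zero =>
    intro x
    simpa [Fm] using (tendsto_const_nhds (x := (1:ℝ))).min (hf 0 x).abs
  | succ n ih =>
    intro x
    have h2 : Tendsto (fun i => min 1 |f (n+1) i x|) atTop (𝓝 0) := by
      simpa using (tendsto_const_nhds (x := (1:ℝ))).min (hf (n+1) x).abs
    simpa [Fm] using (ih x).max h2

lemma Fm_nonneg {X : Type*} (f : ℕ → ℕ → X → ℝ) :
    ∀ n i (x : X), 0 ≤ Fm f n i x := by
  intro n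
  induction n with
  | zero => exact fun i x => le_min zero_le_one (abs_nonneg _)
  | succ n ih => exact fun i x => le_trans (ih i x) (le_max_left _ _)

lemma Fm_le {X : Type*} (f : ℕ → ℕ → X → ℝ) :
    ∀ n m, m ≤ n → ∀ i (x : X), min 1 |f m i x| ≤ Fm f n i x := by
  intro n
  induction n with
  | zero =>
    intro m hm i x
    interval_cases m
    exact le_refl _
  | succ n ih =>
    intro m hm i x
    rcases Nat.lt_succ_iff_lt_or_eq.mp (Nat.lt_succ_of_le hm) with h | h
    · exact le_trans (ih m (Nat.lt_succ_iff.mp h) i x) (le_max_left _ _)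
    · subst h; exact le_max_right _ _

theorem SSP_iff_s1_space (X : Type*) [TopologicalSpace X] [Nonempty X] :
    SSP X ↔ ∀ A : Set (Cp X), seqClosure (seqClosure A) = seqClosure A := by
  constructor
  · intro hssp A
    refine Subset.antisymm ?_ subset_seqClosure
    rintro g ⟨gs, hgs, hg⟩
    choose v hv hvt using hgs
    obtain ⟨i, hi⟩ := hssp (fun n i x => (v n i).1 x - (gs n).1 x)
      (fun n i => ((v n i).2).sub ((gs n).2))
      (fun n x => by
        have := (cp_tendsto.mp (hvt n)) x
        simpa using this.sub_const ((gs n).1 x))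
    refine ⟨fun n => v n (i n), fun n => hv n (i n), cp_tendsto.mpr fun x => ?_⟩
    have h1 : Tendsto (fun n => (gs n).1 x) atTop (𝓝 (g.1 x)) := cp_tendsto.mp hg x
    have := (hi x).add h1
    simpa using this
  · intro hA f hfc hft
    set F := Fm f with hF
    set g : ℕ → ℕ → Cp X := fun n i =>
      ⟨fun x => F n i x + 1/((n:ℝ)+1), (Fm_cont f hfc n i).add continuous_const⟩ with hg
    set A : Set (Cp X) := Set.range (fun p : ℕ × ℕ => g p.1 p.2) with hAdef
    have hc : ∀ n : ℕ, (⟨fun _ => 1/((n:ℝ)+1), continuous_const⟩ : Cp X) ∈ seqClosure A := by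
      intro n
      refine ⟨fun i => g n i, fun i => ⟨(n, i), rfl⟩, cp_tendsto.mpr fun x => ?_⟩
      simpa [hg, hF] using (Fm_tendsto f hft n x).add_const (1/((n:ℝ)+1))
    have h0 : (⟨fun _ => 0, continuous_const⟩ : Cp X) ∈ seqClosure A := by
      rw [← hA]
      refine ⟨fun n => ⟨fun _ => 1/((n:ℝ)+1), continuous_const⟩, hc,
        cp_tendsto.mpr fun x => ?_⟩
      exact tendsto_one_div_add_atTop_nhds_zero_nat
    obtain ⟨u, hu, hut⟩ := h0
    choose p hp using hu
    set nk : ℕ → ℕ := fun k => (p k).1 with hnkdef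
    set jk : ℕ → ℕ := fun k => (p k).2 with hjkdef
    have hux : ∀ k x, (u k).1 x = F (nk k) (jk k) x + 1/((nk k : ℝ)+1) := by
      intro k x
      rw [← hp k]
    obtain ⟨x₀⟩ := ‹Nonempty X›
    have hut0 : ∀ x, Tendsto (fun k => (u k).1 x) atTop (𝓝 0) := cp_tendsto.mp hut
    have hnk : Tendsto nk atTop atTop := by
      have hb : Tendsto (fun k => 1/((nk k : ℝ)+1)) atTop (𝓝 0) := by
        refine squeeze_zero (fun k => by positivity) (fun k => ?_) (hut0 x₀)
        rw [hux k x₀]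
        have := Fm_nonneg f (nk k) (jk k) x₀
        linarith
      rw [tendsto_atTop]
      intro b
      have hpos : (0:ℝ) < 1/((b:ℝ)+1) := by positivity
      filter_upwards [hb.eventually_lt_const hpos] with k hk
      have h1 : (b:ℝ)+1 < (nk k : ℝ)+1 := by
        rw [div_lt_div_iff₀ (by positivity) (by positivity)] at hk
        linarith
      have : (b:ℝ) < nk k := by linarith
      exact_mod_cast this.le
    have hK : ∀ m, ∃ k, m ≤ k ∧ m ≤ nk k := by
      intro m
      obtain ⟨K, hK⟩ := (tendsto_atTop.mp hnk m).exists_forall_of_atTop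
      exact ⟨max m K, le_max_left _ _, hK _ (le_max_right _ _)⟩
    choose K hKm hKn using hK
    refine ⟨fun m => jk (K m), fun x => ?_⟩
    have hKtop : Tendsto K atTop atTop := tendsto_atTop_mono hKm tendsto_id
    have huK : Tendsto (fun m => (u (K m)).1 x) atTop (𝓝 0) := (hut0 x).comp hKtop
    have hmin : Tendsto (fun m => min 1 |f m (jk (K m)) x|) atTop (𝓝 0) := by
      refine squeeze_zero (fun m => le_min zero_le_one (abs_nonneg _)) (fun m => ?_) huK
      have h1 : min 1 |f m (jk (K m)) x| ≤ F (nk (K m)) (jk (K m)) x :=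
        Fm_le f (nk (K m)) m (hKn m) (jk (K m)) x
      rw [hux (K m) x]
      have : (0:ℝ) ≤ 1/((nk (K m) : ℝ)+1) := by positivity
      linarith
    have habs : Tendsto (fun m => |f m (jk (K m)) x|) atTop (𝓝 0) := by
      refine hmin.congr' ?_
      filter_upwards [hmin.eventually_lt_const one_pos] with m hm
      rcases min_lt_iff.mp hm with h | h
      · exact absurd h (lt_irrefl _)
      · exact min_eq_right h.le
    exact tendsto_zero_iff_abs_tendsto_zero _ |>.mpr habs
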